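/- Let a > 1 be real and set δ := a − √(a² − 1), so 0 < δ < 1. For every integer m ≥ 0 and every real polynomial Q of degree at most m, the uniform error satisfies sup over t ∈ [−1,1] of |1/(t+a) − Q(t)| ≥ δᵐ / (a² − 1). -/

import Mathlib

open Polynomial Real

lemma cheb_natDegree_le (n : ℕ) : (Polynomial.Chebyshev.T ℝ (n : ℤ)).natDegree ≤ n := by
  induction n using Nat.twoStepInduction with
  | zero => simp [Polynomial.Chebyshev.T_zero]
  | one => simp [Polynomial.Chebyshev.T_one]
  | more n ih1 ih2 =>
    have h : ((n + 2 : ℕ) : ℤ) = (n : ℤ) + 2 := by push_cast; ring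
    rw [h, Polynomial.Chebyshev.T_add_two]
    refine (Polynomial.natDegree_sub_le _ _).trans ?_
    have h1 : (2 * X * Polynomial.Chebyshev.T ℝ ((n : ℤ) + 1)).natDegree ≤ n + 2 := by
      refine (Polynomial.natDegree_mul_le).trans ?_
      have : ((n : ℤ) + 1) = ((n + 1 : ℕ) : ℤ) := by push_cast; ring
      rw [this]
      have h2X : (2 * X : ℝ[X]).natDegree ≤ 1 := by
        refine (Polynomial.natDegree_mul_le).trans ?_
        simp
      omega
    simp only [max_le_iff]
    exact ⟨h1, by omega⟩

lemma cheb_eval_half (γ : ℝ) (hγ : γ ≠ 0) (n : ℕ) :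
    (Polynomial.Chebyshev.T ℝ (n : ℤ)).eval ((γ + γ⁻¹) / 2) = (γ ^ n + (γ ^ n)⁻¹) / 2 := by
  induction n using Nat.twoStepInduction with
  | zero => simp [Polynomial.Chebyshev.T_zero]
  | one => simp [Polynomial.Chebyshev.T_one]
  | more n ih1 ih2 =>
    have h : ((n + 2 : ℕ) : ℤ) = (n : ℤ) + 2 := by push_cast; ring
    have h1 : ((n + 1 : ℕ) : ℤ) = (n : ℤ) + 1 := by push_cast; ring
    rw [h, Polynomial.Chebyshev.T_add_two]
    rw [h1] at ih2
    simp only [Polynomial.eval_sub, Polynomial.eval_mul, Polynomial.eval_X,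
      Polynomial.eval_ofNat, ih1, ih2]
    have hp : γ ^ n ≠ 0 := pow_ne_zero _ hγ
    field_simp
    ring

lemma alg_I1 (δ c s' : ℝ) (hδ0 : 0 < δ) (hδ1 : δ < 1) (hc : c ≠ 0)
    (hpy : s' ^ 2 + c ^ 2 = 1) :
    (1 + 2 * δ * (2 * c ^ 2 - 1) + δ ^ 2) *
      ((1 - ((1 - δ) / (1 + δ) * (s' / c)) ^ 2) / (1 + ((1 - δ) / (1 + δ) * (s' / c)) ^ 2))
      = (1 + δ ^ 2) * (2 * c ^ 2 - 1) + 2 * δ := by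
  have hδ : (1:ℝ) + δ ≠ 0 := by linarith
  have hs2 : s' ^ 2 = 1 - c ^ 2 := by linarith
  have hc2 : c ^ 2 ≠ 0 := pow_ne_zero _ hc
  have hZ : ((1 + δ) ^ 2 * c ^ 2 : ℝ) ≠ 0 := by positivity
  have hu : ((1 - δ) / (1 + δ) * (s' / c)) ^ 2 = (1 - δ) ^ 2 * (1 - c ^ 2) / ((1 + δ) ^ 2 * c ^ 2) := by
    rw [mul_pow, div_pow, div_pow, hs2]; field_simp; try ring
  rw [hu]
  have key : 1 + (1 - δ) ^ 2 * (1 - c ^ 2) / ((1 + δ) ^ 2 * c ^ 2)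
      = ((1 - δ) ^ 2 * (1 - c ^ 2) + (1 + δ) ^ 2 * c ^ 2) / ((1 + δ) ^ 2 * c ^ 2) := by
    field_simp; try ring
  have key2 : 1 - (1 - δ) ^ 2 * (1 - c ^ 2) / ((1 + δ) ^ 2 * c ^ 2)
      = ((1 + δ) ^ 2 * c ^ 2 - (1 - δ) ^ 2 * (1 - c ^ 2)) / ((1 + δ) ^ 2 * c ^ 2) := by
    field_simp; try ring
  rw [key, key2, div_div_div_cancel_right₀ hZ]
  have hB : ((1 - δ) ^ 2 * (1 - c ^ 2) + (1 + δ) ^ 2 * c ^ 2 : ℝ) ≠ 0 := by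
    have h1 : (0:ℝ) ≤ 1 - c ^ 2 := by nlinarith [sq_nonneg s']
    have h2 : (0:ℝ) < c ^ 2 := by positivity
    nlinarith [sq_nonneg (1 - δ)]
  rw [mul_div_assoc', div_eq_iff hB]
  ring

lemma alg_I2 (δ c s' : ℝ) (hδ0 : 0 < δ) (hδ1 : δ < 1) (hc : c ≠ 0)
    (hpy : s' ^ 2 + c ^ 2 = 1) :
    (1 + 2 * δ * (2 * c ^ 2 - 1) + δ ^ 2) *
      (2 * ((1 - δ) / (1 + δ) * (s' / c)) / (1 + ((1 - δ) / (1 + δ) * (s' / c)) ^ 2))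
      = (1 - δ ^ 2) * (2 * s' * c) := by
  have hδ : (1:ℝ) + δ ≠ 0 := by linarith
  have hs2 : s' ^ 2 = 1 - c ^ 2 := by linarith
  have hc2 : c ^ 2 ≠ 0 := pow_ne_zero _ hc
  have hZ : ((1 + δ) ^ 2 * c ^ 2 : ℝ) ≠ 0 := by positivity
  have hu : ((1 - δ) / (1 + δ) * (s' / c)) ^ 2 = (1 - δ) ^ 2 * (1 - c ^ 2) / ((1 + δ) ^ 2 * c ^ 2) := by
    rw [mul_pow, div_pow, div_pow, hs2]; field_simp; try ring
  rw [hu]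
  have key : 1 + (1 - δ) ^ 2 * (1 - c ^ 2) / ((1 + δ) ^ 2 * c ^ 2)
      = ((1 - δ) ^ 2 * (1 - c ^ 2) + (1 + δ) ^ 2 * c ^ 2) / ((1 + δ) ^ 2 * c ^ 2) := by
    field_simp; try ring
  have key2 : 2 * ((1 - δ) / (1 + δ) * (s' / c))
      = (2 * (1 - δ) * (1 + δ) * s' * c) / ((1 + δ) ^ 2 * c ^ 2) := by
    field_simp; try ring
  rw [key, key2, div_div_div_cancel_right₀ hZ]
  have hB : ((1 - δ) ^ 2 * (1 - c ^ 2) + (1 + δ) ^ 2 * c ^ 2 : ℝ) ≠ 0 := by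
    have h1 : (0:ℝ) ≤ 1 - c ^ 2 := by nlinarith [sq_nonneg s']
    have h2 : (0:ℝ) < c ^ 2 := by positivity
    nlinarith [sq_nonneg (1 - δ)]
  rw [mul_div_assoc', div_eq_iff hB]
  nlinarith [hs2]

lemma cos_two_arctan (u : ℝ) : Real.cos (2 * Real.arctan u) = (1 - u ^ 2) / (1 + u ^ 2) := by
  have h1u : (1 : ℝ) + u ^ 2 ≠ 0 := by positivity
  rw [Real.cos_two_mul, Real.cos_arctan, div_pow, one_pow,
    Real.sq_sqrt (by positivity : (0:ℝ) ≤ 1 + u ^ 2)]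
  field_simp
  ring

lemma sin_two_arctan (u : ℝ) : Real.sin (2 * Real.arctan u) = 2 * u / (1 + u ^ 2) := by
  have h1u : (1 : ℝ) + u ^ 2 ≠ 0 := by positivity
  rw [Real.sin_two_mul, Real.sin_arctan, Real.cos_arctan, mul_assoc, div_mul_div_comm,
    Real.mul_self_sqrt (by positivity : (0:ℝ) ≤ 1 + u ^ 2), mul_one]
  ring

lemma phase_identity (δ : ℝ) (hδ0 : 0 < δ) (hδ1 : δ < 1) (m : ℕ) (θ : ℝ)
    (hθ0 : 0 ≤ θ) (hθπ : θ < π) :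
    Real.cos (((m : ℝ) + 1) * θ) + 2 * δ * Real.cos ((m : ℝ) * θ)
        + δ ^ 2 * Real.cos (((m : ℝ) - 1) * θ)
      = (1 + 2 * δ * Real.cos θ + δ ^ 2) *
          Real.cos ((m : ℝ) * θ + 2 * Real.arctan ((1 - δ) / (1 + δ) * Real.tan (θ / 2))) := by
  have hc : 0 < Real.cos (θ / 2) := by
    apply Real.cos_pos_of_mem_Ioo
    constructor <;> [linarith [Real.pi_pos]; linarith]
  have hpy : Real.sin (θ / 2) ^ 2 + Real.cos (θ / 2) ^ 2 = 1 := Real.sin_sq_add_cos_sq _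
  have htan : Real.tan (θ / 2) = Real.sin (θ / 2) / Real.cos (θ / 2) :=
    Real.tan_eq_sin_div_cos _
  have hcosθ : Real.cos θ = 2 * Real.cos (θ / 2) ^ 2 - 1 := by
    have h := Real.cos_two_mul (θ / 2)
    rw [show 2 * (θ / 2) = θ by ring] at h
    exact h
  have hsinθ : Real.sin θ = 2 * Real.sin (θ / 2) * Real.cos (θ / 2) := by
    have h := Real.sin_two_mul (θ / 2)
    rw [show 2 * (θ / 2) = θ by ring] at h
    exact h
  have e1 : Real.cos (((m : ℝ) + 1) * θ) =
      Real.cos ((m : ℝ) * θ) * Real.cos θ - Real.sin ((m : ℝ) * θ) * Real.sin θ := by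
    rw [show ((m : ℝ) + 1) * θ = (m : ℝ) * θ + θ by ring, Real.cos_add]
  have e2 : Real.cos (((m : ℝ) - 1) * θ) =
      Real.cos ((m : ℝ) * θ) * Real.cos θ + Real.sin ((m : ℝ) * θ) * Real.sin θ := by
    rw [show ((m : ℝ) - 1) * θ = (m : ℝ) * θ - θ by ring, Real.cos_sub]
  have hA : (1 + 2 * δ * Real.cos θ + δ ^ 2) *
      Real.cos (2 * Real.arctan ((1 - δ) / (1 + δ) * Real.tan (θ / 2)))
      = (1 + δ ^ 2) * Real.cos θ + 2 * δ := by
    rw [cos_two_arctan, htan, hcosθ]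
    exact alg_I1 δ (Real.cos (θ / 2)) (Real.sin (θ / 2)) hδ0 hδ1 hc.ne' hpy
  have hB : (1 + 2 * δ * Real.cos θ + δ ^ 2) *
      Real.sin (2 * Real.arctan ((1 - δ) / (1 + δ) * Real.tan (θ / 2)))
      = (1 - δ ^ 2) * Real.sin θ := by
    rw [sin_two_arctan, htan, hsinθ, hcosθ]
    exact alg_I2 δ (Real.cos (θ / 2)) (Real.sin (θ / 2)) hδ0 hδ1 hc.ne' hpy
  rw [e1, e2, Real.cos_add]
  linear_combination Real.sin ((m:ℝ) * θ) * hB - Real.cos ((m:ℝ) * θ) * hA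

open Polynomial

set_option maxHeartbeats 3200000 in
theorem best_approx_inv_lower_bound (a : ℝ) (ha : 1 < a)
    (δ : ℝ) (hδ : δ = a - Real.sqrt (a ^ 2 - 1))
    (m : ℕ) (Q : Polynomial ℝ) (hQ : Q.degree ≤ (m : ℕ)) :
    δ ^ m / (a ^ 2 - 1) ≤
      sSup ((fun t : ℝ => |1 / (t + a) - Q.eval t|) '' Set.Icc (-1 : ℝ) 1) := by
  have hπ := Real.pi_pos
  set s := Real.sqrt (a ^ 2 - 1) with hs
  have hs2 : s ^ 2 = a ^ 2 - 1 := Real.sq_sqrt (by nlinarith)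
  have hs0 : 0 < s := Real.sqrt_pos.mpr (by nlinarith)
  have hsa : s < a := by nlinarith
  have hδ0 : 0 < δ := by rw [hδ]; linarith
  have hδ1 : δ < 1 := by rw [hδ]; nlinarith
  have hkey : 1 + δ ^ 2 = 2 * a * δ := by rw [hδ]; nlinarith
  have hds : 1 - δ ^ 2 = 2 * δ * s := by rw [hδ]; nlinarith
  set E := δ ^ m / s ^ 2 with hE
  have hEpos : 0 < E := by positivity
  rw [show δ ^ m / (a ^ 2 - 1) = E by rw [hE, hs2]]
  -- the polynomial S and its properties
  set S : Polynomial ℝ := Chebyshev.T ℝ ((m : ℤ) + 1) + Polynomial.C (2 * δ) * Chebyshev.T ℝ (m : ℤ)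
      + Polynomial.C (δ ^ 2) * Chebyshev.T ℝ ((m : ℤ) - 1) with hS
  have hSdeg : S.natDegree ≤ m + 1 := by
    rw [hS]
    refine (Polynomial.natDegree_add_le _ _).trans ?_
    simp only [max_le_iff]
    constructor
    · refine (Polynomial.natDegree_add_le _ _).trans ?_
      simp only [max_le_iff]
      constructor
      · rw [show (m : ℤ) + 1 = ((m + 1 : ℕ) : ℤ) by push_cast; ring]
        exact cheb_natDegree_le (m + 1)
      · refine (Polynomial.natDegree_mul_le).trans ?_
        have := cheb_natDegree_le m
        simp only [Polynomial.natDegree_C]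
        omega
    · refine (Polynomial.natDegree_mul_le).trans ?_
      simp only [Polynomial.natDegree_C]
      rcases Nat.eq_zero_or_pos m with hm | hm
      · subst hm
        norm_num [Polynomial.Chebyshev.T_neg_one, Polynomial.natDegree_X]
      · rw [show (m : ℤ) - 1 = ((m - 1 : ℕ) : ℤ) by omega]
        have := cheb_natDegree_le (m - 1)
        omega
  have hSeval : ∀ θ : ℝ, S.eval (Real.cos θ) =
      Real.cos (((m : ℝ) + 1) * θ) + 2 * δ * Real.cos ((m : ℝ) * θ)
        + δ ^ 2 * Real.cos (((m : ℝ) - 1) * θ) := by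
    intro θ
    rw [hS]
    simp only [Polynomial.eval_add, Polynomial.eval_mul, Polynomial.eval_C,
      Polynomial.Chebyshev.T_real_cos]
    push_cast
    ring
  have hγ : (-δ : ℝ) ≠ 0 := by simp; linarith
  have hha : ((-δ) + (-δ)⁻¹) / 2 = -a := by
    rw [div_eq_iff (two_ne_zero)]
    field_simp
    linear_combination -hkey
  have hTa : ∀ n : ℕ, (Chebyshev.T ℝ (n : ℤ)).eval (-a) = (-1) ^ n * ((δ ^ n + (δ ^ n)⁻¹) / 2) := by
    intro n
    have h := cheb_eval_half (-δ) hγ n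
    rw [hha] at h
    rw [h, neg_pow]
    rcases Nat.even_or_odd n with he | ho
    · rw [he.neg_one_pow]; simp
    · rw [ho.neg_one_pow]; rw [neg_one_mul, inv_neg]; ring
  have hδpow : ∀ n : ℕ, (δ : ℝ) ^ n ≠ 0 := fun n => pow_ne_zero _ (ne_of_gt hδ0)
  have hSa : S.eval (-a) * δ ^ (m + 1) = (-1) ^ (m + 1) * (1 - δ ^ 2) ^ 2 / 2 := by
    rcases Nat.eq_zero_or_pos m with hm | hm
    · subst hm
      rw [hS]
      simp only [Polynomial.eval_add, Polynomial.eval_mul, Polynomial.eval_C]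
      rw [show ((0:ℕ) : ℤ) + 1 = ((1:ℕ) : ℤ) by norm_num,
        show ((0:ℕ) : ℤ) - 1 = (-1 : ℤ) by norm_num, Polynomial.Chebyshev.T_neg_one]
      rw [hTa 1, show ((0:ℕ) : ℤ) = ((0:ℕ) : ℤ) from rfl, hTa 0]
      simp only [Polynomial.eval_X, pow_one, pow_zero]
      field_simp
      linear_combination δ ^ 3 * hkey
    · obtain ⟨k, rfl⟩ : ∃ k, m = k + 1 := ⟨m - 1, by omega⟩
      rw [hS]
      simp only [Polynomial.eval_add, Polynomial.eval_mul, Polynomial.eval_C]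
      rw [show ((k + 1 :ℕ) : ℤ) + 1 = ((k + 2 : ℕ) : ℤ) by push_cast; ring,
        show ((k + 1 :ℕ) : ℤ) - 1 = ((k : ℕ) : ℤ) by push_cast; ring]
      rw [hTa (k + 2), hTa (k + 1), hTa k]
      field_simp
      ring
  set c : ℝ := (-1) ^ (m + 1) * 2 * δ ^ (m + 1) / (1 - δ ^ 2) ^ 2 with hc
  set P : Polynomial ℝ := Polynomial.C c * S with hP
  have h1δ2 : (1 - δ ^ 2) ≠ 0 := by nlinarith
  have hPa : P.eval (-a) = 1 := by
    rw [hP, Polynomial.eval_mul, Polynomial.eval_C, hc]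
    rw [div_mul_eq_mul_div, div_eq_one_iff_eq (pow_ne_zero 2 h1δ2)]
    have hsq : ((-1:ℝ)) ^ (m + 1) * ((-1:ℝ)) ^ (m + 1) = 1 := by
      rw [← pow_add]; exact Even.neg_one_pow ⟨m + 1, by ring⟩
    linear_combination (2 * (-1:ℝ) ^ (m + 1)) * hSa + (1 - δ ^ 2) ^ 2 * hsq
  have hc2δ : c * (2 * δ) = (-1) ^ (m + 1) * E := by
    rw [hc, hE, hds]
    have h2δs : (2 * δ * s) ≠ 0 := by positivity
    field_simp
    ring
  -- the best approximation polynomial Qs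
  obtain ⟨Qs, hQs⟩ : (X + Polynomial.C a) ∣ (1 - P) := by
    have : (X - Polynomial.C (-a)) ∣ (1 - P) := by
      rw [Polynomial.dvd_iff_isRoot]
      simp [Polynomial.IsRoot, hPa]
    simpa [sub_neg_eq_add] using this
  have hQsdeg : Qs.natDegree ≤ m := by
    rcases eq_or_ne Qs 0 with h0 | h0
    · simp [h0]
    have hXa : (X + Polynomial.C a) ≠ 0 := Polynomial.X_add_C_ne_zero a
    have hmul : ((X + Polynomial.C a) * Qs).natDegree = 1 + Qs.natDegree := by
      rw [Polynomial.natDegree_mul hXa h0, Polynomial.natDegree_X_add_C]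
    have h1P : (1 - P).natDegree ≤ m + 1 := by
      refine (Polynomial.natDegree_sub_le _ _).trans ?_
      simp only [Polynomial.natDegree_one, max_le_iff]
      refine ⟨by omega, ?_⟩
      rw [hP]
      exact (Polynomial.natDegree_C_mul_le _ _).trans hSdeg
    rw [hQs, hmul] at h1P
    omega
  have hQsval : ∀ x : ℝ, x + a ≠ 0 →
      1 / (x + a) - Qs.eval x = P.eval x / (x + a) := by
    intro x hx
    have h := congrArg (Polynomial.eval x) hQs
    simp only [Polynomial.eval_sub, Polynomial.eval_one, Polynomial.eval_mul,
      Polynomial.eval_add, Polynomial.eval_X, Polynomial.eval_C] at h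
    field_simp
    linarith [h]
  -- the phase function and alternation points
  set β : ℝ := (1 - δ) / (1 + δ) with hβ
  have hβ0 : 0 < β := by rw [hβ]; apply div_pos <;> linarith
  set φ : ℝ → ℝ := fun θ => (m : ℝ) * θ + 2 * Real.arctan (β * Real.tan (θ / 2)) with hφ
  have hφ_mono : StrictMonoOn φ (Set.Ico 0 π) := by
    intro x hx y hy hxy
    rw [hφ]
    have htanlt : Real.tan (x / 2) < Real.tan (y / 2) := by
      apply Real.strictMonoOn_tan
      · constructor <;> [linarith [hx.1]; linarith [hx.2]]
      · constructor <;> [linarith [hy.1]; linarith [hy.2]]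
      · linarith
    have harc : Real.arctan (β * Real.tan (x / 2)) < Real.arctan (β * Real.tan (y / 2)) :=
      Real.arctan_strictMono (by exact mul_lt_mul_of_pos_left htanlt hβ0)
    have hm : (m : ℝ) * x ≤ (m : ℝ) * y := by
      apply mul_le_mul_of_nonneg_left (le_of_lt hxy) (by positivity)
    simp only []
    linarith
  set ε : ℝ := min (π / (2 * (m + 1))) (2 * Real.arctan β) with hε
  have harcβ : 0 < Real.arctan β := by
    have := Real.arctan_strictMono (show (0:ℝ) < β from hβ0)
    rwa [Real.arctan_zero] at this
  have hε0 : 0 < ε := by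
    rw [hε]
    apply lt_min (by positivity) (by linarith)
  have hεπ : ε < π := by
    rw [hε]
    refine (min_le_left _ _).trans_lt ?_
    rw [div_lt_iff₀ (by positivity)]
    nlinarith [Nat.cast_nonneg (α := ℝ) m]
  set θst : ℝ := π - ε with hθst
  have hθst0 : 0 ≤ θst := by rw [hθst]; linarith
  have hθstπ : θst < π := by linarith
  have hφ_cont : ContinuousOn φ (Set.Icc 0 θst) := by
    rw [hφ]
    apply ContinuousOn.add
    · exact (continuous_const.mul continuous_id).continuousOn
    · apply ContinuousOn.mul continuousOn_const
      apply Real.continuous_arctan.comp_continuousOn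
      apply ContinuousOn.mul continuousOn_const
      apply Real.continuousOn_tan.comp ((continuous_id.div_const 2).continuousOn)
      intro x hx
      have : 0 < Real.cos (x / 2) := by
        apply Real.cos_pos_of_mem_Ioo
        constructor
        · simp at hx ⊢; linarith [hx.1]
        · simp at hx ⊢; linarith [hx.2]
      simp only [Set.mem_setOf_eq, Function.comp]
      exact ne_of_gt this
  have hφ0 : φ 0 = 0 := by
    rw [hφ]
    simp [Real.tan_zero, Real.arctan_zero]
  have hφst : (m : ℝ) * π ≤ φ θst := by
    simp only [hφ, hθst]
    have htan_eq : Real.tan ((π - ε) / 2) = (Real.tan (ε / 2))⁻¹ := by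
      rw [show (π - ε) / 2 = π / 2 - ε / 2 by ring, Real.tan_pi_div_two_sub]
    have htpos : 0 < Real.tan (ε / 2) :=
      Real.tan_pos_of_pos_of_lt_pi_div_two (by linarith) (by linarith)
    have htle : Real.tan (ε / 2) ≤ β := by
      have h1 : ε / 2 ≤ Real.arctan β := by
        have := min_le_right (π / (2 * (m + 1))) (2 * Real.arctan β)
        rw [← hε] at this
        linarith
      calc Real.tan (ε / 2) ≤ Real.tan (Real.arctan β) := by
            apply Real.strictMonoOn_tan.monotoneOn
            · constructor <;> [linarith; linarith]
            · constructor <;> [linarith [Real.neg_pi_div_two_lt_arctan β];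
                exact Real.arctan_lt_pi_div_two β]
            · exact h1
          _ = β := Real.tan_arctan β
    have h1le : (1 : ℝ) ≤ β * (Real.tan (ε / 2))⁻¹ := by
      rw [← div_eq_mul_inv, le_div_iff₀ htpos]
      linarith
    have harc1 : π / 4 ≤ Real.arctan (β * (Real.tan (ε / 2))⁻¹) := by
      calc π / 4 = Real.arctan 1 := Real.arctan_one.symm
        _ ≤ _ := Real.arctan_strictMono.monotone h1le
    rw [htan_eq]
    have hmε : (m : ℝ) * ε ≤ π / 2 := by
      have h1 : ε ≤ π / (2 * (m + 1)) := by
        have := min_le_left (π / (2 * (m + 1))) (2 * Real.arctan β)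
        rw [← hε] at this
        linarith
      have h2 : (m : ℝ) * ε ≤ (m : ℝ) * (π / (2 * (m + 1))) := by
        apply mul_le_mul_of_nonneg_left h1 (Nat.cast_nonneg m)
      have h3 : (m : ℝ) * (π / (2 * (m + 1))) ≤ π / 2 := by
        rw [← mul_div_assoc, div_le_div_iff₀ (by positivity) two_pos]
        nlinarith [Nat.cast_nonneg (α := ℝ) m]
      linarith
    nlinarith [harc1, hmε]
  -- alternation points
  have hex : ∀ k : ℕ, ∃ t, t ∈ Set.Icc (0:ℝ) θst ∧ φ t = (min k m : ℕ) * π := by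
    intro k
    have hsub : Set.Icc (φ 0) (φ θst) ⊆ φ '' Set.Icc 0 θst :=
      intermediate_value_Icc hθst0 hφ_cont
    have hmem : ((min k m : ℕ) : ℝ) * π ∈ Set.Icc (φ 0) (φ θst) := by
      rw [hφ0]
      constructor
      · positivity
      · refine le_trans ?_ hφst
        apply mul_le_mul_of_nonneg_right _ (le_of_lt hπ)
        exact_mod_cast Nat.cast_le.mpr (min_le_right k m)
    obtain ⟨t, ht, hφt⟩ := hsub hmem
    exact ⟨t, ht, hφt⟩
  choose θk hθk1 hθk2 using hex
  set xpt : ℕ → ℝ := fun k => if k ≤ m then Real.cos (θk k) else -1 with hxpt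
  have hxmem : ∀ k, xpt k ∈ Set.Icc (-1:ℝ) 1 := by
    intro k
    rw [hxpt]
    by_cases hk : k ≤ m
    · simp only [if_pos hk]
      exact ⟨Real.neg_one_le_cos _, Real.cos_le_one _⟩
    · simp only [if_neg hk]
      constructor <;> norm_num
  have hxa : ∀ k, 0 < xpt k + a := by
    intro k
    have := (hxmem k).1
    linarith
  have hθmem : ∀ k, θk k ∈ Set.Ico (0:ℝ) π := by
    intro k
    obtain ⟨h1, h2⟩ := hθk1 k
    exact ⟨h1, lt_of_le_of_lt h2 hθstπ⟩
  have hθlt : ∀ j k, j < k → k ≤ m → θk j < θk k := by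
    intro j k hjk hk
    have hj := hθmem j
    have hk' := hθmem k
    rw [← hφ_mono.lt_iff_lt hj hk', hθk2, hθk2,
      min_eq_left hk, min_eq_left (by omega : j ≤ m)]
    have : (j : ℝ) < (k : ℝ) := by exact_mod_cast hjk
    nlinarith
  have hxlt : ∀ j k, j < k → k ≤ m + 1 → xpt k < xpt j := by
    intro j k hjk hk
    by_cases hkm : k ≤ m
    · rw [hxpt]
      simp only [if_pos hkm, if_pos (by omega : j ≤ m)]
      apply Real.strictAntiOn_cos
      · exact ⟨(hθmem j).1, le_of_lt (hθmem j).2⟩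
      · exact ⟨(hθmem k).1, le_of_lt (hθmem k).2⟩
      · exact hθlt j k hjk hkm
    · have hk1 : k = m + 1 := by omega
      rw [hxpt]
      simp only [if_neg (by omega : ¬ k ≤ m), if_pos (by omega : j ≤ m)]
      have := Real.strictAntiOn_cos
        ⟨(hθmem j).1, le_of_lt (hθmem j).2⟩ ⟨le_of_lt hπ, le_refl π⟩ (hθmem j).2
      rw [Real.cos_pi] at this
      exact this
  -- the alternation values
  have hcosnat : ∀ n : ℕ, Real.cos ((n : ℝ) * π) = (-1) ^ n := by
    intro n
    have := Real.cos_nat_mul_pi_sub 0 n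
    simpa using this
  have hval : ∀ k ≤ m + 1, 1 / (xpt k + a) - Qs.eval (xpt k) = (-1) ^ (m + 1 + k) * E := by
    intro k hk
    rw [hQsval _ (ne_of_gt (hxa k))]
    have hppow : (-1 : ℝ) ^ (m + 1 + k) = (-1) ^ (m + 1) * (-1) ^ k := pow_add (-1) (m + 1) k
    by_cases hkm : k ≤ m
    · have hx : xpt k = Real.cos (θk k) := by rw [hxpt]; simp only [if_pos hkm]
      have hθ0' : 0 ≤ θk k := (hθmem k).1
      have hθπ' : θk k < π := (hθmem k).2
      have hphase := phase_identity δ hδ0 hδ1 m (θk k) hθ0' hθπ'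
      have hcosφ : Real.cos (φ (θk k)) = (-1) ^ k := by
        rw [hθk2, min_eq_left hkm, hcosnat]
      have hPx : P.eval (xpt k) = c * (2 * δ * (xpt k + a)) * (-1) ^ k := by
        rw [hP, Polynomial.eval_mul, Polynomial.eval_C, hx, hSeval, hphase]
        rw [show (m : ℝ) * θk k + 2 * Real.arctan ((1 - δ) / (1 + δ) * Real.tan (θk k / 2))
            = φ (θk k) by rw [hφ, hβ]]
        rw [hcosφ]
        have hD : 1 + 2 * δ * Real.cos (θk k) + δ ^ 2
            = 2 * δ * (Real.cos (θk k) + a) := by linear_combination hkey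
        rw [hD]
        ring
      rw [hPx, div_eq_iff (ne_of_gt (hxa k)), hppow]
      linear_combination ((-1 : ℝ) ^ k * (xpt k + a)) * hc2δ
    · have hk1 : k = m + 1 := by omega
      have hx : xpt k = Real.cos π := by
        rw [hxpt]; simp only [if_neg (by omega : ¬ k ≤ m)]; rw [Real.cos_pi]
      have hcm : Real.cos ((m : ℝ) * π) = (-1) ^ m := hcosnat m
      have hcm1 : Real.cos (((m : ℝ) + 1) * π) = (-1) ^ (m + 1) := by
        have := hcosnat (m + 1)
        rw [show (((m + 1 : ℕ)) : ℝ) = (m : ℝ) + 1 by push_cast; ring] at this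
        exact this
      have hcm2 : Real.cos (((m : ℝ) - 1) * π) = -(-1) ^ m := by
        rw [show ((m : ℝ) - 1) * π = (m : ℝ) * π - π by ring, Real.cos_sub, Real.cos_pi,
          Real.sin_pi, hcm]
        ring
      have hSx : S.eval (Real.cos π) = (-1) ^ (m + 1) * (1 - δ) ^ 2 := by
        rw [hSeval, hcm, hcm1, hcm2, pow_succ]
        ring
      have hPx : P.eval (xpt k) = c * (2 * δ) * (-1) ^ (m + 1) * (xpt k + a) := by
        rw [hP, Polynomial.eval_mul, Polynomial.eval_C, hx, hSx]
        have hD : (1 - δ) ^ 2 = 2 * δ * (Real.cos π + a) := by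
          rw [Real.cos_pi]; linear_combination hkey
        rw [hD]
        ring
      have h2 : (-1 : ℝ) ^ (m + 1) * (-1 : ℝ) ^ (m + 1) = 1 := by
        rw [← pow_add]; exact Even.neg_one_pow ⟨m + 1, by ring⟩
      have heven : (-1 : ℝ) ^ (m + 1 + (m + 1)) = 1 := Even.neg_one_pow ⟨m + 1, by ring⟩
      rw [hPx, div_eq_iff (ne_of_gt (hxa k)), hk1, heven]
      linear_combination ((-1 : ℝ) ^ (m + 1) * (xpt (m + 1) + a)) * hc2δ
        + (E * (xpt (m + 1) + a)) * h2
  by_contra hcon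
  push_neg at hcon
  have hsup : ∀ k ≤ m + 1, |1 / (xpt k + a) - Q.eval (xpt k)| < E := by
    intro k hk
    have hbdd : BddAbove ((fun t : ℝ => |1 / (t + a) - Q.eval t|) '' Set.Icc (-1 : ℝ) 1) := by
      apply IsCompact.bddAbove_image isCompact_Icc
      apply ContinuousOn.abs
      apply ContinuousOn.sub
      · apply ContinuousOn.div continuousOn_const (continuous_id.add continuous_const).continuousOn
        intro t ht
        have := ht.1
        simp only [Pi.add_apply, id]
        intro h0
        linarith
      · exact Q.continuous.continuousOn
    have hle : |1 / (xpt k + a) - Q.eval (xpt k)| ≤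
        sSup ((fun t : ℝ => |1 / (t + a) - Q.eval t|) '' Set.Icc (-1 : ℝ) 1) :=
      le_csSup hbdd ⟨xpt k, hxmem k, rfl⟩
    exact lt_of_le_of_lt hle hcon
  set d : Polynomial ℝ := Q - Qs with hd
  have hddeg : d.natDegree ≤ m := by
    rw [hd]
    refine (Polynomial.natDegree_sub_le _ _).trans ?_
    simp only [max_le_iff]
    exact ⟨Polynomial.natDegree_le_iff_degree_le.mpr hQ, hQsdeg⟩
  have hsign : ∀ k ≤ m + 1, 0 < (-1) ^ (m + 1 + k) * d.eval (xpt k) := by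
    intro k hk
    have hde : d.eval (xpt k) = (1 / (xpt k + a) - Qs.eval (xpt k))
        - (1 / (xpt k + a) - Q.eval (xpt k)) := by
      rw [hd, Polynomial.eval_sub]
      ring
    rw [hde, hval k hk]
    set w := 1 / (xpt k + a) - Q.eval (xpt k) with hw
    have hwE : |w| < E := hsup k hk
    have hsq : (-1 : ℝ) ^ (m + 1 + k) * (-1 : ℝ) ^ (m + 1 + k) = 1 := by
      rw [← pow_add]; exact Even.neg_one_pow ⟨m + 1 + k, by ring⟩
    have habs1 : |(-1 : ℝ) ^ (m + 1 + k)| = 1 := by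
      rw [abs_pow, abs_neg, abs_one, one_pow]
    have habs : (-1 : ℝ) ^ (m + 1 + k) * w ≤ |w| := by
      calc (-1 : ℝ) ^ (m + 1 + k) * w ≤ |(-1 : ℝ) ^ (m + 1 + k) * w| := le_abs_self _
        _ = |w| := by rw [abs_mul, habs1, one_mul]
    nlinarith
  have hroot : ∀ k : ℕ, ∃ r, r ∈ Set.Ioo (xpt (min k m + 1)) (xpt (min k m)) ∧ d.eval r = 0 := by
    intro k
    set j := min k m with hj
    have hjm : j ≤ m := min_le_right _ _
    have hlt : xpt (j + 1) < xpt j := hxlt j (j + 1) (by omega) (by omega)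
    have hs0 := hsign j (by omega)
    have hs1 := hsign (j + 1) (by omega)
    have hcontd : ContinuousOn (fun x => d.eval x) (Set.Icc (xpt (j + 1)) (xpt j)) :=
      d.continuous.continuousOn
    rcases Nat.even_or_odd (m + 1 + j) with he | ho
    · rw [he.neg_one_pow] at hs0
      have : (-1 : ℝ) ^ (m + 1 + (j + 1)) = -1 := by
        rw [show m + 1 + (j + 1) = (m + 1 + j) + 1 by ring, pow_succ, he.neg_one_pow]
        ring
      rw [this] at hs1
      have hmem : (0 : ℝ) ∈ Set.Ioo (d.eval (xpt (j + 1))) (d.eval (xpt j)) := by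
        constructor <;> nlinarith
      obtain ⟨r, hr, hr0⟩ := intermediate_value_Ioo (le_of_lt hlt) hcontd hmem
      exact ⟨r, hr, hr0⟩
    · rw [ho.neg_one_pow] at hs0
      have : (-1 : ℝ) ^ (m + 1 + (j + 1)) = 1 := by
        rw [show m + 1 + (j + 1) = (m + 1 + j) + 1 by ring, pow_succ, ho.neg_one_pow]
        ring
      rw [this] at hs1
      have hmem : (0 : ℝ) ∈ Set.Ioo (d.eval (xpt j)) (d.eval (xpt (j + 1))) := by
        constructor <;> nlinarith
      obtain ⟨r, hr, hr0⟩ := intermediate_value_Ioo' (le_of_lt hlt) hcontd hmem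
      exact ⟨r, hr, hr0⟩
  choose r hr1 hr2 using hroot
  have hrmono : ∀ j k, j < k → k ≤ m → r k < r j := by
    intro j k hjk hkm
    have hjm : j ≤ m := by omega
    have h1 := hr1 k
    have h2 := hr1 j
    rw [min_eq_left hkm] at h1
    rw [min_eq_left hjm] at h2
    have hup : xpt k ≤ xpt (j + 1) := by
      rcases eq_or_lt_of_le (by omega : j + 1 ≤ k) with he | hlt'
      · rw [he]
      · exact le_of_lt (hxlt (j + 1) k hlt' (by omega))
    calc r k < xpt k := h1.2
      _ ≤ xpt (j + 1) := hup
      _ < r j := h2.1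
  have hdzero : d = 0 := by
    apply Polynomial.eq_zero_of_natDegree_lt_card_of_eval_eq_zero' d
      ((Finset.range (m + 1)).image r)
    · intro i hi
      obtain ⟨j, hj, rfl⟩ := Finset.mem_image.mp hi
      exact hr2 j
    · have hinj : Set.InjOn r (Finset.range (m + 1)) := by
        intro x hx y hy hxy
        simp only [Finset.coe_range, Set.mem_Iio] at hx hy
        by_contra hne
        rcases lt_or_gt_of_ne hne with h | h
        · exact absurd hxy (ne_of_gt (hrmono x y h (by omega)))
        · exact absurd hxy.symm (ne_of_gt (hrmono y x h (by omega)))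
      rw [Finset.card_image_of_injOn hinj, Finset.card_range]
      omega
  have := hsign 0 (by omega)
  rw [hdzero] at this
  simp at this
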